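/- The cardinality of S(Y,Y',l_0,i_0) equals min(|Y|, l_0) · (i_0 - l_0 - 1)! · (n - i_0)! · Π_{j=1}^{l_0} (x_j - j + 1). -/

import Mathlib

open Finset

namespace Secretary

/-- Binomial coefficient on integers: zero when `b < 0` or `b > a`. -/
noncomputable def Cb (a b : ℤ) : ℝ :=
  if 0 ≤ b ∧ b ≤ a then (Nat.choose a.toNat b.toNat : ℝ) else 0

/-- The value `π(i)` of a permutation of `{1,...,n}` in 1-based indexing. -/
def pv (n : ℕ) (π : Equiv.Perm (Fin n)) (i : ℕ) : ℕ :=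
  if h : i - 1 < n then ((π ⟨i - 1, h⟩ : Fin n) : ℕ) + 1 else 0

/-- The relative rank `ρ_π(i)`: the number of `j ∈ {1,...,i}` with `π(j) ≤ π(i)`. -/
def rho (n : ℕ) (π : Equiv.Perm (Fin n)) (i : ℕ) : ℕ :=
  ((Finset.Icc 1 i).filter fun j => pv n π j ≤ pv n π i).card

/-- Extension of a sequence `s` with `s (k+1) = n - 1`. -/
def sExt (n k : ℕ) (s : ℕ → ℕ) (l : ℕ) : ℕ := if l = k + 1 then n - 1 else s l

/-- `i` is a `(π, l, w)`-element. -/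
def IsElem (n k : ℕ) (s : ℕ → ℕ) (π : Equiv.Perm (Fin n)) (l i : ℕ) : Prop :=
  sExt n k s l < i ∧ i ≤ sExt n k s (l + 1) ∧ rho n π i ≤ l

/-- `l` is a `w`-threshold of `π`. -/
def IsThreshold (n k : ℕ) (s : ℕ → ℕ) (π : Equiv.Perm (Fin n)) (l : ℕ) : Prop :=
  1 ≤ l ∧ l ≤ k ∧ ∃ i, IsElem n k s π l i

open Classical in
/-- `π` is a lucky permutation for the sequence `w = s`. -/
def Lucky (n k : ℕ) (s : ℕ → ℕ) (π : Equiv.Perm (Fin n)) : Prop :=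
  if ∃ l, IsThreshold n k s π l then
    pv n π (sInf {i | IsElem n k s π (sInf {l | IsThreshold n k s π l}) i}) ≤ k
  else pv n π n ≤ k

/-- The maps `r_l` (first argument an integer `l ≤ k`). -/
noncomputable def rr (n k : ℕ) (l : ℤ) (x : ℕ) : ℝ :=
  if l < 0 then 0
  else if l = 0 then
    1 / (x : ℝ) - (k : ℝ) / n - Cb ((n : ℤ) - x - 1) k / ((x : ℝ) * Cb n k)
      - (1 / Cb n k) * ∑ j ∈ Finset.Icc 1 x, Cb ((n : ℤ) - j - 1) ((k : ℤ) - 1) / (j : ℝ)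
  else
    ((Nat.factorial (x - l.toNat - 1) : ℝ) / (Nat.factorial x : ℝ)) *
      (1 - (1 / ((l : ℝ) * Cb n x)) *
        ∑ j ∈ Finset.range (l.toNat + 1),
          ((l : ℝ) - j) * Cb k j * Cb ((n : ℤ) - k) ((x : ℤ) - j))

/-- The constant `δ_{k,n}`. -/
noncomputable def delta (n k : ℕ) : ℝ :=
  if k = 1 then -(1 / (n : ℝ)) * ∑ j ∈ Finset.Icc 1 (n - 1), (1 : ℝ) / j
  else (Nat.factorial (n - k) : ℝ) / (Nat.factorial n : ℝ)

/-- The maps `d_l` for `0 ≤ l ≤ k`. -/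
noncomputable def d (n k : ℕ) (l x : ℕ) : ℝ :=
  if l = 0 then
    -1 + (k : ℝ) * x / n + Cb ((n : ℤ) - x - 1) k / Cb n k
      + ((x : ℝ) / Cb n k) * ∑ j ∈ Finset.Icc 1 x, Cb ((n : ℤ) - j - 1) ((k : ℤ) - 1) / (j : ℝ)
  else if l = 1 then
    -((k : ℝ) / n) - (1 / Cb n k) * ∑ j ∈ Finset.Icc 1 x, Cb ((n : ℤ) - j - 1) ((k : ℤ) - 1) / (j : ℝ)
  else
    ((k : ℝ) * (Nat.factorial x : ℝ) * (Nat.factorial (n - l - x) : ℝ) /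
        ((l : ℝ) * ((l : ℝ) - 1) * (Nat.factorial n : ℝ))) *
      ∑ j ∈ Finset.range (l - 1), Cb ((k : ℤ) - 1) j * Cb ((n : ℤ) - k) ((x : ℤ) + l - j - 1)

/-- The maps `c_l(x) = d_l(x - l)`. -/
noncomputable def c (n k l x : ℕ) : ℝ := d n k l (x - l)

/-- The constant `ξ_{k,n}`. -/
noncomputable def xi (n k : ℕ) : ℝ :=
  (k : ℝ) * (Nat.factorial (n - k - 1) : ℝ) / (Nat.factorial n : ℝ)

/-- `w` (given as a 1-indexed function) is a word in `X^{(k-l)}`, i.e. its `j`-th letter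
belongs to `X_{l+j} = {l+j, ..., n-1}` for `1 ≤ j ≤ k - l`. -/
def memX (n k l : ℕ) (w : ℕ → ℕ) : Prop :=
  ∀ j ∈ Finset.Icc 1 (k - l), l + j ≤ w j ∧ w j ≤ n - 1

/-- The left-shift operator removing the first `l` letters of a word. -/
def shift (l : ℕ) (w : ℕ → ℕ) : ℕ → ℕ := fun j => w (l + j)

/-- The maps `R_{l,j}`. -/
noncomputable def Rmap (n k l : ℕ) (w : ℕ → ℕ) (j : ℕ) : ℝ :=
  if 1 ≤ j ∧ j ≤ k - l then
    rr n k ((l : ℤ) + j - 1) (w j)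
      - rr n k ((l : ℤ) + j - 1) (if j = k - l then n - 1 else w (j + 1))
  else 0

/-- The maps `Γ_{l,j,j'}`. -/
noncomputable def Gam (n k l j j' : ℕ) (w : ℕ → ℕ) : ℝ :=
  if 1 ≤ j ∧ j ≤ j' ∧ j' ≤ k - l then
    ∏ t ∈ Finset.Icc j j', ((w t : ℝ) - l - t + 1)
  else 1

/-- The maps `T_l`. -/
noncomputable def Tmap (n k l : ℕ) (w : ℕ → ℕ) : ℝ :=
  (∑ j ∈ Finset.Icc 1 (k - l), Rmap n k l w j * Gam n k l 1 j w)
    + xi n k * Gam n k l 1 (k - l) w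

/-- The maps `D_l(w) = r_{l-1}(x_1) - T_l(w)`, with `x_1 := n-1` when `l = k`. -/
noncomputable def Dmap (n k l : ℕ) (w : ℕ → ℕ) : ℝ :=
  rr n k ((l : ℤ) - 1) (if l = k then n - 1 else w 1) - Tmap n k l w

/-- The maps `F_{l,w}(x) = -c_{l-1}(x) - x·D_l(w)`. -/
noncomputable def Fmap (n k l : ℕ) (w : ℕ → ℕ) (x : ℕ) : ℝ :=
  -(c n k (l - 1) x) - (x : ℝ) * Dmap n k l w

/-- The maps `a_l`. -/
noncomputable def amap (n k l x : ℕ) : ℝ :=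
  (1 / Cb n x) * ∑ j ∈ Finset.range (l + 1), Cb k j * Cb ((n : ℤ) - k) ((x : ℤ) - j)

/-- The maps `b_l`. -/
noncomputable def bmap (n k l x : ℕ) : ℝ :=
  (1 / ((l : ℝ) * Cb n x)) *
    ∑ j ∈ Finset.range (l + 1), (j : ℝ) * Cb k j * Cb ((n : ℤ) - k) ((x : ℤ) - j)

/-- `π ∈ S(l0, i0)`: `π` is lucky for `s`, `l0` is the smallest `s`-threshold of `π`,
and `i0` is the smallest `(π, l0, s)`-element. -/
def SMem (n k : ℕ) (s : ℕ → ℕ) (l0 i0 : ℕ) (π : Equiv.Perm (Fin n)) : Prop :=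
  Lucky n k s π ∧ IsLeast {l | IsThreshold n k s π l} l0 ∧
    IsLeast {i | IsElem n k s π l0 i} i0

/-- `π ∈ S(Y, Y', l0, i0)`. -/
def SYYMem (n k : ℕ) (s : ℕ → ℕ) (Y Y' : Finset ℕ) (l0 i0 : ℕ) (π : Equiv.Perm (Fin n)) :
    Prop :=
  SMem n k s l0 i0 π ∧ ((Finset.Icc 1 i0).image (pv n π)) ∩ Finset.Icc 1 k = Y ∧
    ((Finset.Icc 1 i0).image (pv n π)) ∩ Finset.Icc (k + 1) n = Y'


-- ## Auxiliary lemmas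
-- insertion
def ins (m : ℕ) (a : Fin (m+1)) (τ : Equiv.Perm (Fin m)) : Equiv.Perm (Fin (m+1)) :=
  (finSuccEquiv' (Fin.last m)).trans ((Equiv.optionCongr τ).trans (finSuccEquiv' a).symm)

lemma ins_last (m : ℕ) (a : Fin (m+1)) (τ : Equiv.Perm (Fin m)) :
    ins m a τ (Fin.last m) = a := by
  simp [ins]

lemma ins_castSucc (m : ℕ) (a : Fin (m+1)) (τ : Equiv.Perm (Fin m)) (j : Fin m) :
    ins m a τ (Fin.castSucc j) = a.succAbove (τ j) := by
  have h : (finSuccEquiv' (Fin.last m)) j.castSucc = some j := by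
    rw [← Fin.succAbove_last, finSuccEquiv'_succAbove]
  simp [ins, h]

lemma ins_injective (m : ℕ) : Function.Injective (fun p : Fin (m+1) × Equiv.Perm (Fin m) => ins m p.1 p.2) := by
  rintro ⟨a, τ⟩ ⟨a', τ'⟩ h
  simp only at h
  have ha : a = a' := by
    have := congrArg (fun σ : Equiv.Perm (Fin (m+1)) => σ (Fin.last m)) h
    simpa [ins_last] using this
  subst ha
  have hτ : τ = τ' := by
    ext j
    have := congrArg (fun σ : Equiv.Perm (Fin (m+1)) => σ (Fin.castSucc j)) h
    simp only [ins_castSucc] at this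
    exact Fin.val_eq_of_eq (a.succAbove_right_injective this)
  simp [hτ]

lemma ins_bijective (m : ℕ) : Function.Bijective (fun p : Fin (m+1) × Equiv.Perm (Fin m) => ins m p.1 p.2) := by
  rw [Fintype.bijective_iff_injective_and_card]
  refine ⟨ins_injective m, ?_⟩
  simp [Fintype.card_perm, Nat.factorial_succ]





lemma pv_eq (n : ℕ) (π : Equiv.Perm (Fin n)) (j : ℕ) (h : j - 1 < n) :
    pv n π j = (π ⟨j - 1, h⟩ : ℕ) + 1 := by
  simp [pv, h]

lemma card_filter_shift (n : ℕ) (P : ℕ → Prop) [DecidablePred P] (Q : Fin n → Prop)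
    [DecidablePred Q] (h : ∀ x : Fin n, (P ((x : ℕ) + 1) ↔ Q x)) :
    ((Icc 1 n).filter P).card = (univ.filter Q).card := by
  apply Finset.card_bij' (i := fun j hj => (⟨j - 1, by
      simp only [mem_filter, mem_Icc] at hj; omega⟩ : Fin n)) (j := fun x _ => (x : ℕ) + 1)
  case hi =>
    intro a ha
    have ha' := ha
    simp only [mem_filter, mem_Icc] at ha'
    simp only [mem_filter, mem_univ, true_and]
    rw [← h]
    show P (a - 1 + 1)
    have e : a - 1 + 1 = a := by omega
    rw [e]; exact ha'.2
  case hj =>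
    intro x hx
    simp only [mem_filter, mem_univ, true_and] at hx
    simp only [mem_filter, mem_Icc]
    exact ⟨⟨by omega, by omega⟩, (h x).mpr hx⟩
  case left_inv =>
    intro a ha
    simp only [mem_filter, mem_Icc] at ha
    show a - 1 + 1 = a
    omega
  case right_inv =>
    intro x hx
    show (⟨(x : ℕ) + 1 - 1, _⟩ : Fin n) = x
    simp [Fin.ext_iff]

lemma rho_last (n : ℕ) (hn : 0 < n) (π : Equiv.Perm (Fin n)) :
    rho n π n = (π ⟨n - 1, by omega⟩ : ℕ) + 1 := by
  unfold rho
  rw [card_filter_shift n _ (fun x => π x ≤ π ⟨n - 1, by omega⟩)]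
  · have h1 : (univ.filter (fun x => π x ≤ π ⟨n - 1, by omega⟩)).card
        = (univ.filter (fun y => y ≤ π ⟨n - 1, by omega⟩)).card := by
      apply Finset.card_bij (i := fun x _ => π x)
      · intro a ha; simp only [mem_filter] at *; exact ⟨mem_univ _, ha.2⟩
      · intro a _ b _ hab; exact π.injective hab
      · intro b hb
        simp only [mem_filter] at hb
        exact ⟨π.symm b, by simp [hb.2], by simp⟩
    rw [h1]
    have h2 : (univ.filter (fun y => y ≤ π ⟨n - 1, by omega⟩)) = Iic (π ⟨n - 1, by omega⟩) := by
      ext y; simp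
    rw [h2, Fin.card_Iic]
  · intro x
    rw [pv_eq n π ((x : ℕ) + 1) (by simp), pv_eq n π n (by omega)]
    have ex : (⟨(x : ℕ) + 1 - 1, by simp⟩ : Fin n) = x := by simp [Fin.ext_iff]
    rw [ex]
    simp only [Fin.le_def]
    omega

lemma rho_ins_last (m : ℕ) (a : Fin (m+1)) (τ : Equiv.Perm (Fin m)) :
    rho (m+1) (ins m a τ) (m+1) = (a : ℕ) + 1 := by
  rw [rho_last (m+1) (by omega)]
  congr 1
  have e : (⟨m + 1 - 1, by omega⟩ : Fin (m+1)) = Fin.last m := by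
    simp [Fin.last, Fin.ext_iff]
  rw [e, ins_last]

lemma rho_ins_lt (m : ℕ) (a : Fin (m+1)) (τ : Equiv.Perm (Fin m)) (i : ℕ)
    (h1 : 1 ≤ i) (hm : i ≤ m) :
    rho (m+1) (ins m a τ) i = rho m τ i := by
  unfold rho
  congr 1
  apply Finset.filter_congr
  intro j hj
  simp only [mem_Icc] at hj
  have hjm : j - 1 < m := by omega
  have him : i - 1 < m := by omega
  have e1 : ∀ (l : ℕ) (hl : l - 1 < m),
      pv (m+1) (ins m a τ) l = (a.succAbove (τ ⟨l-1, hl⟩) : ℕ) + 1 := by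
    intro l hl
    rw [pv_eq (m+1) _ l (by omega)]
    have e : (⟨l - 1, by omega⟩ : Fin (m+1)) = Fin.castSucc ⟨l - 1, hl⟩ := by
      simp [Fin.ext_iff]
    rw [e, ins_castSucc]
  rw [e1 j hjm, e1 i him, pv_eq m τ j hjm, pv_eq m τ i him]
  have key := @Fin.succAbove_le_succAbove_iff m a (τ ⟨j-1, hjm⟩) (τ ⟨i-1, him⟩)
  simp only [Fin.le_def] at key
  omega





lemma card_fin_succ_filter (m : ℕ) (D : Finset ℕ) :
    (univ.filter (fun a : Fin (m+1) => (a : ℕ) + 1 ∈ D)).card = (D ∩ Icc 1 (m+1)).card := by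
  refine Finset.card_bij (fun a _ => (a : ℕ) + 1) ?_ ?_ ?_
  · intro a ha
    simp only [mem_filter, mem_univ, true_and] at ha
    simp only [mem_inter, mem_Icc]
    exact ⟨ha, by omega, by omega⟩
  · intro a _ b _ hab
    exact Fin.ext (by omega)
  · intro b hb
    simp only [mem_inter, mem_Icc] at hb
    refine ⟨⟨b - 1, by omega⟩, ?_, by simp; omega⟩
    simp only [mem_filter, mem_univ, true_and]
    have e : b - 1 + 1 = b := by omega
    simpa [e] using hb.1

lemma card_perm_rank : ∀ (m : ℕ) (C : ℕ → Finset ℕ),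
    Nat.card {σ : Equiv.Perm (Fin m) // ∀ i ∈ Icc 1 m, rho m σ i ∈ C i}
      = ∏ i ∈ Icc 1 m, ((C i) ∩ Icc 1 i).card := by
  intro m
  induction m with
  | zero =>
    intro C
    simp only [Icc_self, Icc_eq_empty_of_lt (by norm_num : (1:ℕ) > 0)]
    simp [Nat.card_eq_fintype_card]
  | succ m ih =>
    intro C
    have key : ∀ p : Fin (m+1) × Equiv.Perm (Fin m),
        (∀ i ∈ Icc 1 (m+1), rho (m+1) (ins m p.1 p.2) i ∈ C i)
          ↔ ((p.1 : ℕ) + 1 ∈ C (m+1) ∧ ∀ i ∈ Icc 1 m, rho m p.2 i ∈ C i) := by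
      rintro ⟨a, τ⟩
      constructor
      · intro h
        refine ⟨?_, ?_⟩
        · have := h (m+1) (by simp)
          rwa [rho_ins_last] at this
        · intro i hi
          simp only [mem_Icc] at hi
          have := h i (by simp only [mem_Icc]; omega)
          rwa [rho_ins_lt m a τ i hi.1 hi.2] at this
      · rintro ⟨h1, h2⟩ i hi
        simp only [mem_Icc] at hi
        rcases Nat.lt_or_ge i (m+1) with hlt | hge
        · rw [rho_ins_lt m a τ i hi.1 (by omega)]
          exact h2 i (by simp only [mem_Icc]; omega)
        · have : i = m + 1 := by omega
          subst this
          rwa [rho_ins_last]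
    have e1 : {σ : Equiv.Perm (Fin (m+1)) // ∀ i ∈ Icc 1 (m+1), rho (m+1) σ i ∈ C i}
        ≃ {p : Fin (m+1) × Equiv.Perm (Fin m) //
            (p.1 : ℕ) + 1 ∈ C (m+1) ∧ ∀ i ∈ Icc 1 m, rho m p.2 i ∈ C i} :=
      ((Equiv.subtypeEquiv (Equiv.ofBijective _ (ins_bijective m))
        (fun p => by rw [Equiv.ofBijective_apply]; exact (key p).symm)).symm)
    rw [Nat.card_congr e1,
      Nat.card_congr (Equiv.subtypeProdEquivProd
        (p := fun a : Fin (m+1) => (a : ℕ) + 1 ∈ C (m+1))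
        (q := fun τ : Equiv.Perm (Fin m) => ∀ i ∈ Icc 1 m, rho m τ i ∈ C i)),
      Nat.card_prod]
    rw [Nat.card_eq_fintype_card, Fintype.card_subtype, card_fin_succ_filter, ih C]
    rw [Finset.prod_Icc_succ_top (by omega : 1 ≤ m + 1)]
    ring





lemma prod_Icc_one_id (M : ℕ) : ∏ i ∈ Icc 1 M, i = M.factorial := by
  induction M with
  | zero => simp
  | succ M ih =>
    rw [Finset.prod_Icc_succ_top (by omega : 1 ≤ M + 1), ih, Nat.factorial_succ]
    ring

lemma monoIcc (t : ℕ → ℕ) (L : ℕ) (h : ∀ j, 1 ≤ j → j < L → t j ≤ t (j+1)) :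
    ∀ a b, 1 ≤ a → a ≤ b → b ≤ L → t a ≤ t b := by
  intro a b ha
  induction b with
  | zero => intro hab _; exact absurd (le_trans ha hab) (by omega)
  | succ b ihb =>
    intro hab hbL
    rcases Nat.eq_or_lt_of_le hab with he | hlt
    · rw [he]
    · exact le_trans (ihb (by omega) (by omega)) (h b (by omega) (by omega))

lemma prodId : ∀ (m : ℕ) (t : ℕ → ℕ) (L : ℕ),
    (∀ j, 1 ≤ j → j < L → t j ≤ t (j+1)) →
    (∀ j, 1 ≤ j → j ≤ L → j ≤ t j ∧ t j ≤ m) →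
    ∏ i ∈ Icc 1 m, (i - ((Icc 1 L).filter (fun j => t j < i)).card)
      = (m - L).factorial * ∏ j ∈ Icc 1 L, (t j - j + 1) := by
  intro m
  induction m with
  | zero =>
    intro t L hmono hb
    have hL : L = 0 := by
      by_contra hL
      have := hb 1 le_rfl (by omega)
      omega
    subst hL
    simp
  | succ m ih =>
    intro t L
    induction L with
    | zero =>
      intro hmono hb
      have : ∀ i ∈ Icc 1 (m+1), i - ((Icc 1 0).filter (fun j => t j < i)).card = i := by
        intro i _
        simp
      rw [Finset.prod_congr rfl this, prod_Icc_one_id]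
      simp
    | succ L ihL =>
      intro hmono hb
      have hmono' : ∀ j, 1 ≤ j → j < L → t j ≤ t (j+1) := fun j h1 h2 => hmono j h1 (by omega)
      have hmIcc := monoIcc t (L+1) hmono
      rcases Nat.lt_or_ge (t (L+1)) (m+1) with hlt | hge
      · -- t (L+1) ≤ m : peel position m+1
        have hcnt : ((Icc 1 (L+1)).filter (fun j => t j < m+1)).card = L + 1 := by
          have he : (Icc 1 (L+1)).filter (fun j => t j < m+1) = Icc 1 (L+1) := by
            apply Finset.filter_true_of_mem
            intro j hj
            simp only [mem_Icc] at hj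
            have := hmIcc j (L+1) hj.1 hj.2 le_rfl
            omega
          rw [he, Nat.card_Icc]
          omega
        have hb' : ∀ j, 1 ≤ j → j ≤ L + 1 → j ≤ t j ∧ t j ≤ m := by
          intro j h1 h2
          have h3 := hb j h1 h2
          have h4 := hmIcc j (L+1) h1 h2 le_rfl
          omega
        rw [Finset.prod_Icc_succ_top (by omega : 1 ≤ m + 1), hcnt,
          ih t (L+1) hmono hb']
        rw [Finset.prod_Icc_succ_top (by omega : 1 ≤ L + 1)]
        have hLm : L + 1 ≤ m := by
          have := hb (L+1) (by omega) le_rfl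
          omega
        have e1 : m + 1 - (L+1) = (m - (L+1)) + 1 := by omega
        rw [e1, Nat.factorial_succ]
        have e2 : m - (L+1) + 1 = m + 1 - (L+1) := by omega
        ring
      · -- t (L+1) = m+1 : drop the threshold L+1
        have hte : t (L+1) = m + 1 := by
          have := hb (L+1) (by omega) le_rfl
          omega
        have hfilt : ∀ i ∈ Icc 1 (m+1),
            i - ((Icc 1 (L+1)).filter (fun j => t j < i)).card
              = i - ((Icc 1 L).filter (fun j => t j < i)).card := by
          intro i hi
          simp only [mem_Icc] at hi
          have hins : Icc 1 (L+1) = insert (L+1) (Icc 1 L) := by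
            ext x
            simp only [mem_insert, mem_Icc]
            omega
          rw [hins, Finset.filter_insert, if_neg (by omega)]
        have hbL : ∀ j, 1 ≤ j → j ≤ L → j ≤ t j ∧ t j ≤ m + 1 :=
          fun j h1 h2 => hb j h1 (by omega)
        rw [Finset.prod_congr rfl hfilt, ihL hmono' hbL,
          Finset.prod_Icc_succ_top (by omega : 1 ≤ L + 1)]
        have hLm : L + 1 ≤ m + 1 := by
          have := hb (L+1) (by omega) le_rfl
          omega
        have e1 : m + 1 - L = (m - L) + 1 := by omega
        have e2 : t (L+1) - (L+1) + 1 = m + 1 - L := by omega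
        rw [e1, Nat.factorial_succ, e2, e1]
        have e3 : m + 1 - (L + 1) = m - L := by omega
        rw [e3]
        ring



def posE (n i0 : ℕ) (hle : i0 ≤ n) : Fin n ≃ Fin i0 ⊕ Fin (n - i0) :=
  (finCongr (by omega : n = i0 + (n - i0))).trans finSumFinEquiv.symm

lemma posE_symm_inl (n i0 : ℕ) (hle : i0 ≤ n) (q : Fin i0) :
    ((posE n i0 hle).symm (Sum.inl q) : ℕ) = q := by
  simp [posE]

lemma posE_symm_inr (n i0 : ℕ) (hle : i0 ≤ n) (r : Fin (n - i0)) :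
    ((posE n i0 hle).symm (Sum.inr r) : ℕ) = i0 + r := by
  simp [posE]

lemma posE_apply_lt (n i0 : ℕ) (hle : i0 ≤ n) (p : Fin n) (hp : (p : ℕ) < i0) :
    (posE n i0 hle) p = Sum.inl ⟨p, hp⟩ := by
  rw [Equiv.apply_eq_iff_eq_symm_apply]
  apply Fin.ext
  rw [posE_symm_inl]

lemma posE_apply_ge (n i0 : ℕ) (hle : i0 ≤ n) (p : Fin n) (hp : i0 ≤ (p : ℕ)) :
    (posE n i0 hle) p = Sum.inr ⟨(p : ℕ) - i0, by omega⟩ := by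
  rw [Equiv.apply_eq_iff_eq_symm_apply]
  apply Fin.ext
  rw [posE_symm_inr]
  simp
  omega

noncomputable def eVmap (n i0 : ℕ) (V0 : Finset (Fin n)) (hV0 : V0.card = i0) :
    Fin i0 ≃o {x // x ∈ V0} := V0.orderIsoOfFin hV0

lemma compl_card (n i0 : ℕ) (V0 : Finset (Fin n)) (hV0 : V0.card = i0) :
    (V0ᶜ).card = n - i0 := by
  rw [Finset.card_compl, hV0]
  simp

noncomputable def eCmap (n i0 : ℕ) (V0 : Finset (Fin n)) (hV0 : V0.card = i0) :
    Fin (n - i0) ≃o {x // x ∈ V0ᶜ} :=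
  (V0ᶜ).orderIsoOfFin (compl_card n i0 V0 hV0)

noncomputable def valE (n i0 : ℕ) (V0 : Finset (Fin n)) (hV0 : V0.card = i0) :
    Fin i0 ⊕ Fin (n - i0) ≃ Fin n :=
  (Equiv.sumCongr (eVmap n i0 V0 hV0).toEquiv
    (((eCmap n i0 V0 hV0).toEquiv).trans
      (Equiv.subtypeEquivRight (fun x => Finset.mem_compl)))).trans
    (Equiv.sumCompl (· ∈ V0))

noncomputable def Phi (n i0 : ℕ) (hle : i0 ≤ n) (V0 : Finset (Fin n)) (hV0 : V0.card = i0)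
    (σ : Equiv.Perm (Fin i0)) (τ : Equiv.Perm (Fin (n - i0))) :
    Equiv.Perm (Fin n) :=
  ((posE n i0 hle).trans (Equiv.sumCongr σ τ)).trans (valE n i0 V0 hV0)

lemma Phi_apply_lt (n i0 : ℕ) (hle : i0 ≤ n) (V0 : Finset (Fin n)) (hV0 : V0.card = i0)
    (σ : Equiv.Perm (Fin i0)) (τ : Equiv.Perm (Fin (n - i0)))
    (p : Fin n) (hp : (p : ℕ) < i0) :
    Phi n i0 hle V0 hV0 σ τ p = ((eVmap n i0 V0 hV0) (σ ⟨p, hp⟩) : Fin n) := by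
  simp only [Phi, Equiv.trans_apply, posE_apply_lt n i0 hle p hp, Equiv.sumCongr_apply,
    Sum.map_inl, valE]
  simp

lemma Phi_apply_ge (n i0 : ℕ) (hle : i0 ≤ n) (V0 : Finset (Fin n)) (hV0 : V0.card = i0)
    (σ : Equiv.Perm (Fin i0)) (τ : Equiv.Perm (Fin (n - i0)))
    (p : Fin n) (hp : i0 ≤ (p : ℕ)) :
    Phi n i0 hle V0 hV0 σ τ p = ((eCmap n i0 V0 hV0) (τ ⟨(p : ℕ) - i0, by
      have := p.isLt; omega⟩) : Fin n) := by
  simp only [Phi, Equiv.trans_apply, posE_apply_ge n i0 hle p hp, Equiv.sumCongr_apply,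
    Sum.map_inr, valE]
  simp





lemma rho_Phi (n i0 : ℕ) (hle : i0 ≤ n) (V0 : Finset (Fin n)) (hV0 : V0.card = i0)
    (σ : Equiv.Perm (Fin i0)) (τ : Equiv.Perm (Fin (n - i0)))
    (i : ℕ) (h1 : 1 ≤ i) (h2 : i ≤ i0) :
    rho n (Phi n i0 hle V0 hV0 σ τ) i = rho i0 σ i := by
  unfold rho
  congr 1
  apply Finset.filter_congr
  intro j hj
  simp only [mem_Icc] at hj
  have hj0 : j - 1 < i0 := by omega
  have hi0' : i - 1 < i0 := by omega
  have e1 : ∀ (l : ℕ) (hl : l - 1 < i0),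
      pv n (Phi n i0 hle V0 hV0 σ τ) l
        = ((eVmap n i0 V0 hV0) (σ ⟨l - 1, hl⟩) : Fin n) + 1 := by
    intro l hl
    rw [pv_eq n _ l (by omega)]
    rw [Phi_apply_lt n i0 hle V0 hV0 σ τ ⟨l - 1, by omega⟩ hl]
  rw [e1 j hj0, e1 i hi0', pv_eq i0 σ j hj0, pv_eq i0 σ i hi0']
  have key := @OrderIso.le_iff_le _ _ _ _ (eVmap n i0 V0 hV0) (σ ⟨j-1, hj0⟩) (σ ⟨i-1, hi0'⟩)
  rw [← Subtype.coe_le_coe] at key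
  simp only [Fin.le_def] at key
  omega

lemma Phi_injective (n i0 : ℕ) (hle : i0 ≤ n) (V0 : Finset (Fin n)) (hV0 : V0.card = i0) :
    Function.Injective (fun st : Equiv.Perm (Fin i0) × Equiv.Perm (Fin (n - i0)) =>
      Phi n i0 hle V0 hV0 st.1 st.2) := by
  rintro ⟨σ, τ⟩ ⟨σ', τ'⟩ h
  simp only [Prod.mk.injEq]
  constructor
  · ext q
    have hq : ((( posE n i0 hle).symm (Sum.inl q) : Fin n) : ℕ) < i0 := by
      rw [posE_symm_inl]; exact q.isLt
    have h1 := congrArg (fun π : Equiv.Perm (Fin n) => π ((posE n i0 hle).symm (Sum.inl q))) h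
    simp only [Phi_apply_lt n i0 hle V0 hV0 σ τ _ hq, Phi_apply_lt n i0 hle V0 hV0 σ' τ' _ hq]
      at h1
    have hfq : (⟨(((posE n i0 hle).symm (Sum.inl q) : Fin n) : ℕ), hq⟩ : Fin i0) = q := by
      apply Fin.ext
      simp [posE_symm_inl]
    rw [hfq] at h1
    have := (eVmap n i0 V0 hV0).injective (Subtype.ext h1)
    rw [this]
  · ext r
    have hr0 : (r : ℕ) < n - i0 := r.isLt
    have hq : i0 ≤ ((( posE n i0 hle).symm (Sum.inr r) : Fin n) : ℕ) := by
      rw [posE_symm_inr]; omega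
    have h1 := congrArg (fun π : Equiv.Perm (Fin n) => π ((posE n i0 hle).symm (Sum.inr r))) h
    simp only [Phi_apply_ge n i0 hle V0 hV0 σ τ _ hq, Phi_apply_ge n i0 hle V0 hV0 σ' τ' _ hq]
      at h1
    have hfq : (⟨(((posE n i0 hle).symm (Sum.inr r) : Fin n) : ℕ) - i0, by
        have := ((posE n i0 hle).symm (Sum.inr r)).isLt; omega⟩ : Fin (n - i0)) = r := by
      apply Fin.ext
      simp [posE_symm_inr]
    rw [hfq] at h1
    have := (eCmap n i0 V0 hV0).injective (Subtype.ext h1)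
    rw [this]

lemma image_Phi (n i0 : ℕ) (hle : i0 ≤ n) (V0 : Finset (Fin n)) (hV0 : V0.card = i0)
    (σ : Equiv.Perm (Fin i0)) (τ : Equiv.Perm (Fin (n - i0))) :
    (Icc 1 i0).image (pv n (Phi n i0 hle V0 hV0 σ τ)) = V0.image (fun x : Fin n => (x : ℕ) + 1) := by
  ext v
  simp only [mem_image]
  constructor
  · rintro ⟨j, hj, rfl⟩
    simp only [mem_Icc] at hj
    have hj0 : j - 1 < i0 := by omega
    rw [pv_eq n _ j (by omega), Phi_apply_lt n i0 hle V0 hV0 σ τ ⟨j-1, by omega⟩ hj0]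
    exact ⟨_, ((eVmap n i0 V0 hV0) (σ ⟨j-1, hj0⟩)).2, rfl⟩
  · rintro ⟨x, hx, rfl⟩
    set q := σ.symm ((eVmap n i0 V0 hV0).symm ⟨x, hx⟩) with hq
    refine ⟨(q : ℕ) + 1, by simp only [mem_Icc]; exact ⟨by omega, by have := q.isLt; omega⟩, ?_⟩
    have hq0 : (q : ℕ) + 1 - 1 < i0 := by simpa using q.isLt
    have hq0n : (q : ℕ) + 1 - 1 < n := by omega
    rw [pv_eq n _ _ hq0n, Phi_apply_lt n i0 hle V0 hV0 σ τ ⟨(q : ℕ) + 1 - 1, hq0n⟩ hq0]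
    have e2 : (⟨(q : ℕ) + 1 - 1, hq0⟩ : Fin i0) = q := by simp [Fin.ext_iff]
    have e3 : (⟨((⟨(q : ℕ) + 1 - 1, hq0n⟩ : Fin n) : ℕ), hq0⟩ : Fin i0) = q := by
      simp [Fin.ext_iff]
    rw [e3, hq]
    simp

lemma Phi_surjective (n i0 : ℕ) (hle : i0 ≤ n) (V0 : Finset (Fin n)) (hV0 : V0.card = i0)
    (π : Equiv.Perm (Fin n)) (hπ : ∀ p : Fin n, (p : ℕ) < i0 → π p ∈ V0) :
    ∃ σ τ, Phi n i0 hle V0 hV0 σ τ = π := by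
  -- the map on low positions
  have hmemV : ∀ q : Fin i0, π ((posE n i0 hle).symm (Sum.inl q)) ∈ V0 := by
    intro q
    apply hπ
    rw [posE_symm_inl]
    exact q.isLt
  have hcardV : Fintype.card {x // x ∈ V0} = i0 := by simp [Fintype.card_coe, hV0]
  let f : Fin i0 → {x // x ∈ V0} := fun q => ⟨π ((posE n i0 hle).symm (Sum.inl q)), hmemV q⟩
  have hfinj : Function.Injective f := by
    intro a b hab
    have := π.injective (congrArg Subtype.val hab)
    have := (posE n i0 hle).symm.injective this
    exact Sum.inl_injective this
  have hfbij : Function.Bijective f := by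
    rw [Fintype.bijective_iff_injective_and_card]
    exact ⟨hfinj, by simp [hcardV]⟩
  -- high positions avoid V0
  have hπ' : ∀ p : Fin n, i0 ≤ (p : ℕ) → π p ∈ V0ᶜ := by
    intro p hp
    rw [Finset.mem_compl]
    intro hmem
    obtain ⟨q, hq⟩ := hfbij.2 ⟨π p, hmem⟩
    have : (posE n i0 hle).symm (Sum.inl q) = p := π.injective (congrArg Subtype.val hq)
    have hv := congrArg Fin.val this
    rw [posE_symm_inl] at hv
    omega
  have hcardC : Fintype.card {x // x ∈ V0ᶜ} = n - i0 := by
    simp [Fintype.card_coe, Finset.card_compl, hV0]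
  let g : Fin (n - i0) → {x // x ∈ V0ᶜ} := fun r =>
    ⟨π ((posE n i0 hle).symm (Sum.inr r)), hπ' _ (by rw [posE_symm_inr]; omega)⟩
  have hginj : Function.Injective g := by
    intro a b hab
    have := π.injective (congrArg Subtype.val hab)
    have := (posE n i0 hle).symm.injective this
    exact Sum.inr_injective this
  have hgbij : Function.Bijective g := by
    rw [Fintype.bijective_iff_injective_and_card]
    exact ⟨hginj, by rw [hcardC]; simp⟩
  refine ⟨(Equiv.ofBijective f hfbij).trans (eVmap n i0 V0 hV0).toEquiv.symm,
    (Equiv.ofBijective g hgbij).trans (eCmap n i0 V0 hV0).toEquiv.symm, ?_⟩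
  apply Equiv.ext
  intro p
  rcases Nat.lt_or_ge (p : ℕ) i0 with hp | hp
  · rw [Phi_apply_lt n i0 hle V0 hV0 _ _ p hp]
    have e1 : (eVmap n i0 V0 hV0) (((Equiv.ofBijective f hfbij).trans
        (eVmap n i0 V0 hV0).toEquiv.symm) ⟨p, hp⟩) = f ⟨p, hp⟩ := by
      simp
    rw [e1]
    have e2 : (posE n i0 hle).symm (Sum.inl ⟨p, hp⟩) = p := by
      apply Fin.ext
      rw [posE_symm_inl]
    show π ((posE n i0 hle).symm (Sum.inl ⟨p, hp⟩)) = π p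
    rw [e2]
  · rw [Phi_apply_ge n i0 hle V0 hV0 _ _ p hp]
    have e1 : (eCmap n i0 V0 hV0) (((Equiv.ofBijective g hgbij).trans
        (eCmap n i0 V0 hV0).toEquiv.symm) ⟨(p : ℕ) - i0, by have := p.isLt; omega⟩)
          = g ⟨(p : ℕ) - i0, by have := p.isLt; omega⟩ := by
      simp
    rw [e1]
    have e2 : (posE n i0 hle).symm (Sum.inr ⟨(p : ℕ) - i0, by have := p.isLt; omega⟩) = p := by
      apply Fin.ext
      rw [posE_symm_inr]
      show i0 + ((p : ℕ) - i0) = (p : ℕ)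
      omega
    show π ((posE n i0 hle).symm (Sum.inr ⟨(p : ℕ) - i0, by have := p.isLt; omega⟩)) = π p
    rw [e2]







lemma card_perm_pattern (n i0 : ℕ) (hle : i0 ≤ n) (V : Finset ℕ) (hV : V ⊆ Icc 1 n)
    (hVcard : V.card = i0) (C : ℕ → Finset ℕ)
    (hrank : ∀ m : ℕ, ∀ C' : ℕ → Finset ℕ,
      Nat.card {σ : Equiv.Perm (Fin m) // ∀ i ∈ Icc 1 m, rho m σ i ∈ C' i}
        = ∏ i ∈ Icc 1 m, ((C' i) ∩ Icc 1 i).card) :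
    Nat.card {π : Equiv.Perm (Fin n) //
        (∀ i ∈ Icc 1 i0, rho n π i ∈ C i) ∧ (Icc 1 i0).image (pv n π) = V}
      = (∏ i ∈ Icc 1 i0, ((C i) ∩ Icc 1 i).card) * (n - i0).factorial := by
  classical
  set V0 : Finset (Fin n) := univ.filter (fun x : Fin n => (x : ℕ) + 1 ∈ V) with hV0def
  have hV0img : V0.image (fun x : Fin n => (x : ℕ) + 1) = V := by
    ext v
    simp only [hV0def, mem_image, mem_filter, mem_univ, true_and]
    constructor
    · rintro ⟨x, hx, rfl⟩
      exact hx
    · intro hv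
      have hv' := hV hv
      simp only [mem_Icc] at hv'
      refine ⟨⟨v - 1, by omega⟩, ?_, by simp; omega⟩
      show v - 1 + 1 ∈ V
      have e : v - 1 + 1 = v := by omega
      rw [e]; exact hv
  have hV0card : V0.card = i0 := by
    rw [← hVcard, ← hV0img]
    rw [Finset.card_image_of_injective]
    intro a b hab
    simp only at hab
    exact Fin.ext (by omega)
  -- the bijection
  have key : Function.Bijective
      (fun st : {st : Equiv.Perm (Fin i0) × Equiv.Perm (Fin (n - i0)) //
          ∀ i ∈ Icc 1 i0, rho i0 st.1 i ∈ C i} =>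
        (⟨Phi n i0 hle V0 hV0card st.1.1 st.1.2, by
          constructor
          · intro i hi
            simp only [mem_Icc] at hi
            rw [rho_Phi n i0 hle V0 hV0card _ _ i hi.1 hi.2]
            exact st.2 i (by simp only [mem_Icc]; exact hi)
          · rw [image_Phi n i0 hle V0 hV0card, hV0img]⟩ :
        {π : Equiv.Perm (Fin n) //
          (∀ i ∈ Icc 1 i0, rho n π i ∈ C i) ∧ (Icc 1 i0).image (pv n π) = V})) := by
    constructor
    · rintro ⟨⟨σ, τ⟩, hst⟩ ⟨⟨σ', τ'⟩, hst'⟩ h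
      have := Phi_injective n i0 hle V0 hV0card (congrArg Subtype.val h)
      exact Subtype.ext this
    · rintro ⟨π, hπ1, hπ2⟩
      have hlow : ∀ p : Fin n, (p : ℕ) < i0 → π p ∈ V0 := by
        intro p hp
        simp only [hV0def, mem_filter, mem_univ, true_and]
        rw [← hπ2]
        apply Finset.mem_image.mpr
        refine ⟨(p : ℕ) + 1, by simp only [mem_Icc]; omega, ?_⟩
        rw [pv_eq n π ((p : ℕ) + 1) (by have := p.isLt; omega)]
        have e : (⟨(p : ℕ) + 1 - 1, by have := p.isLt; omega⟩ : Fin n) = p :=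
          Fin.ext (by simp)
        rw [e]
      obtain ⟨σ, τ, hστ⟩ := Phi_surjective n i0 hle V0 hV0card π hlow
      refine ⟨⟨⟨σ, τ⟩, ?_⟩, ?_⟩
      · intro i hi
        simp only [mem_Icc] at hi
        rw [← rho_Phi n i0 hle V0 hV0card σ τ i hi.1 hi.2, hστ]
        exact hπ1 i (by simp only [mem_Icc]; exact hi)
      · apply Subtype.ext
        exact hστ
  rw [← Nat.card_eq_of_bijective _ key]
  rw [Nat.card_congr (Equiv.prodSubtypeFstEquivSubtypeProd
    (p := fun σ : Equiv.Perm (Fin i0) => ∀ i ∈ Icc 1 i0, rho i0 σ i ∈ C i))]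
  rw [Nat.card_prod, hrank i0 C]
  congr 1
  rw [Nat.card_eq_fintype_card, Fintype.card_perm, Fintype.card_fin]




lemma rho_pos (n : ℕ) (π : Equiv.Perm (Fin n)) (i : ℕ) (h : 1 ≤ i) : 1 ≤ rho n π i := by
  apply Finset.card_pos.mpr
  exact ⟨i, by simp [mem_filter, mem_Icc, h]⟩

lemma rho_le_self (n : ℕ) (π : Equiv.Perm (Fin n)) (i : ℕ) : rho n π i ≤ i := by
  refine le_trans (Finset.card_filter_le _ _) ?_
  rw [Nat.card_Icc]
  omega

lemma pv_inj (n : ℕ) (π : Equiv.Perm (Fin n)) (j j' : ℕ) (h1 : 1 ≤ j) (h2 : j ≤ n)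
    (h1' : 1 ≤ j') (h2' : j' ≤ n) (he : pv n π j = pv n π j') : j = j' := by
  have hj : j - 1 < n := by omega
  have hj' : j' - 1 < n := by omega
  rw [pv_eq n π j hj, pv_eq n π j' hj'] at he
  have h3 : π ⟨j-1, hj⟩ = π ⟨j'-1, hj'⟩ := Fin.ext (by omega)
  have h4 := π.injective h3
  have h5 := congrArg Fin.val h4
  simp only at h5
  omega

lemma image_pv_subset (n : ℕ) (π : Equiv.Perm (Fin n)) (i0 : ℕ) (h : i0 ≤ n) :
    (Icc 1 i0).image (pv n π) ⊆ Icc 1 n := by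
  intro v hv
  rw [mem_image] at hv
  obtain ⟨j, hj, rfl⟩ := hv
  simp only [mem_Icc] at hj ⊢
  have hjn : j - 1 < n := by omega
  rw [pv_eq n π j hjn]
  have := (π ⟨j-1, hjn⟩).isLt
  omega

lemma inter_split (n k : ℕ) (hkn : k ≤ n) (S Y Y' : Finset ℕ) (hS : S ⊆ Icc 1 n)
    (hY : Y ⊆ Icc 1 k) (hY' : Y' ⊆ Icc (k+1) n) :
    (S ∩ Icc 1 k = Y ∧ S ∩ Icc (k+1) n = Y') ↔ S = Y ∪ Y' := by
  constructor
  · rintro ⟨h1, h2⟩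
    rw [← h1, ← h2]
    ext v
    simp only [mem_union, mem_inter, mem_Icc]
    constructor
    · intro hv
      have hvn := hS hv
      simp only [mem_Icc] at hvn
      by_cases hvk : v ≤ k
      · exact Or.inl ⟨hv, by omega, hvk⟩
      · exact Or.inr ⟨hv, by omega, by omega⟩
    · rintro (⟨hv, _⟩ | ⟨hv, _⟩) <;> exact hv
  · rintro rfl
    constructor
    · ext v
      simp only [mem_inter, mem_union, mem_Icc]
      constructor
      · rintro ⟨hv | hv, hk2⟩
        · exact hv
        · exfalso
          have := hY' hv
          simp only [mem_Icc] at this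
          omega
      · intro hv
        have := hY hv
        simp only [mem_Icc] at this
        exact ⟨Or.inl hv, this⟩
    · ext v
      simp only [mem_inter, mem_union, mem_Icc]
      constructor
      · rintro ⟨hv | hv, hk2⟩
        · exfalso
          have := hY hv
          simp only [mem_Icc] at this
          omega
        · exact hv
      · intro hv
        have := hY' hv
        simp only [mem_Icc] at this
        exact ⟨Or.inr hv, this⟩

lemma rho_eq_card_V (n i0 : ℕ) (h : i0 ≤ n) (π : Equiv.Perm (Fin n)) (V : Finset ℕ)
    (himg : (Icc 1 i0).image (pv n π) = V) (a : ℕ) :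
    ((Icc 1 i0).filter (fun j => pv n π j ≤ a)).card = (V.filter (fun v => v ≤ a)).card := by
  rw [← himg, Finset.filter_image, Finset.card_image_of_injOn]
  intro x hx y hy he
  simp only [coe_filter, Set.mem_setOf_eq, mem_Icc] at hx hy
  exact pv_inj n π x y hx.1.1 (by omega) hy.1.1 (by omega) he

lemma rank_iff (n k i0 : ℕ) (h1 : 1 ≤ i0) (h : i0 ≤ n) (π : Equiv.Perm (Fin n))
    (Y Y' : Finset ℕ) (hY : Y ⊆ Icc 1 k) (hY' : Y' ⊆ Icc (k+1) n)
    (himg : (Icc 1 i0).image (pv n π) = Y ∪ Y') :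
    (pv n π i0 ≤ k ↔ rho n π i0 ≤ Y.card) := by
  have hr : rho n π i0 = ((Y ∪ Y').filter (fun v => v ≤ pv n π i0)).card := by
    unfold rho
    exact rho_eq_card_V n i0 h π (Y ∪ Y') himg (pv n π i0)
  by_cases hk : pv n π i0 ≤ k
  · simp only [hk, true_iff]
    rw [hr]
    apply Finset.card_le_card
    intro v hv
    simp only [mem_filter, mem_union] at hv
    rcases hv.1 with h' | h'
    · exact h'
    · exfalso
      have := hY' h'
      simp only [mem_Icc] at this
      omega
  · simp only [hk, false_iff]
    push_neg at hk
    intro hle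
    rw [hr] at hle
    have hsub : insert (pv n π i0) Y ⊆ (Y ∪ Y').filter (fun v => v ≤ pv n π i0) := by
      intro v hv
      rcases Finset.mem_insert.mp hv with rfl | hv
      · simp only [mem_filter]
        refine ⟨?_, le_rfl⟩
        rw [← himg]
        exact Finset.mem_image.mpr ⟨i0, by simp [mem_Icc, h1], rfl⟩
      · simp only [mem_filter, mem_union]
        have := hY hv
        simp only [mem_Icc] at this
        exact ⟨Or.inl hv, by omega⟩
    have hcard := Finset.card_le_card hsub
    rw [Finset.card_insert_of_notMem (fun hmem => by
      have := hY hmem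
      simp only [mem_Icc] at this
      omega)] at hcard
    omega


theorem card_SYY (n k : ℕ) (hk : 1 ≤ k) (hkn : k < n) (s : ℕ → ℕ)
    (hmono : ∀ l ∈ Finset.Icc 1 (k - 1), s l ≤ s (l + 1))
    (hbdd : ∀ l ∈ Finset.Icc 1 k, l ≤ s l ∧ s l ≤ n - 1)
    (l0 i0 : ℕ) (hl0 : l0 ∈ Finset.Icc 1 k)
    (hi0 : s l0 < i0 ∧ i0 ≤ sExt n k s (l0 + 1))
    (Y Y' : Finset ℕ) (hY : Y ⊆ Finset.Icc 1 k) (hY' : Y' ⊆ Finset.Icc (k + 1) n)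
    (hcard : Y.card + Y'.card = i0) :
    (Nat.card {π : Equiv.Perm (Fin n) // SYYMem n k s Y Y' l0 i0 π} : ℝ) =
      (min Y.card l0 : ℝ) * (Nat.factorial (i0 - l0 - 1) : ℝ) *
        (Nat.factorial (n - i0) : ℝ) * ∏ j ∈ Finset.Icc 1 l0, ((s j : ℝ) - j + 1) := by
  classical
  simp only [mem_Icc] at hl0
  obtain ⟨hl01, hl0k⟩ := hl0
  have hsl0 := hbdd l0 (by simp only [mem_Icc]; omega)
  have hi0l0 : l0 < i0 := by omega
  have hi0n : i0 < n := by
    have h2 := hi0.2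
    unfold sExt at h2
    by_cases hc : l0 + 1 = k + 1
    · rw [if_pos hc] at h2; omega
    · rw [if_neg hc] at h2
      have := hbdd (l0+1) (by simp only [mem_Icc]; omega)
      omega
  have hmono' : ∀ j, 1 ≤ j → j < l0 → s j ≤ s (j+1) := by
    intro j h1 h2
    exact hmono j (by simp only [mem_Icc]; omega)
  have hmIcc := monoIcc s l0 hmono'
  have hbdd' : ∀ j, 1 ≤ j → j ≤ l0 → j ≤ s j ∧ s j ≤ i0 - 1 := by
    intro j h1 h2
    have hb := hbdd j (by simp only [mem_Icc]; omega)
    have := hmIcc j l0 h1 h2 le_rfl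
    omega
  set V : Finset ℕ := Y ∪ Y' with hVdef
  have hdisj : Disjoint Y Y' := by
    rw [Finset.disjoint_left]
    intro a ha ha'
    have h1 := hY ha
    have h2 := hY' ha'
    simp only [mem_Icc] at h1 h2
    omega
  have hVcard : V.card = i0 := by
    rw [hVdef, Finset.card_union_of_disjoint hdisj, hcard]
  have hVsub : V ⊆ Icc 1 n := by
    intro v hv
    rw [hVdef, mem_union] at hv
    simp only [mem_Icc]
    rcases hv with h | h
    · have := hY h; simp only [mem_Icc] at this; omega
    · have := hY' h; simp only [mem_Icc] at this; omega
  set cnt : ℕ → ℕ := fun i => ((Icc 1 l0).filter (fun j => s j < i)).card with hcntdef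
  set C : ℕ → Finset ℕ := fun i => if i = i0 then Icc 1 (min Y.card l0) else Icc (cnt i + 1) i
    with hCdef
  have hcnt_le : ∀ i, cnt i ≤ l0 := by
    intro i
    simp only [hcntdef]
    refine le_trans (Finset.card_filter_le _ _) ?_
    rw [Nat.card_Icc]
    omega
  have hcnt_lt : ∀ i j, 1 ≤ j → j ≤ cnt i → s j < i := by
    intro i j h1 h2
    by_contra hge
    push_neg at hge
    have hsub : (Icc 1 l0).filter (fun jj => s jj < i) ⊆ Icc 1 (j - 1) := by
      intro x hx
      simp only [mem_filter, mem_Icc] at hx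
      simp only [mem_Icc]
      refine ⟨hx.1.1, ?_⟩
      by_contra hxj
      push_neg at hxj
      have : s j ≤ s x := hmIcc j x h1 (by omega) hx.1.2
      omega
    have hcc := Finset.card_le_card hsub
    rw [Nat.card_Icc] at hcc
    simp only [hcntdef] at h2
    omega
  have hcnt_full : ∀ i, s l0 < i → cnt i = l0 := by
    intro i hi
    simp only [hcntdef]
    rw [Finset.filter_true_of_mem, Nat.card_Icc]
    · omega
    · intro j hj
      simp only [mem_Icc] at hj
      exact lt_of_le_of_lt (hmIcc j l0 hj.1 hj.2 le_rfl) hi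
  have hcnt_ge : ∀ i l, 1 ≤ l → l ≤ l0 → s l < i → l ≤ cnt i := by
    intro i l h1 h2 hsl
    simp only [hcntdef]
    have hsub : Icc 1 l ⊆ (Icc 1 l0).filter (fun j => s j < i) := by
      intro x hx
      simp only [mem_Icc] at hx
      simp only [mem_filter, mem_Icc]
      exact ⟨⟨hx.1, by omega⟩, lt_of_le_of_lt (hmIcc x l hx.1 hx.2 h2) hsl⟩
    have := Finset.card_le_card hsub
    rw [Nat.card_Icc] at this
    omega
  -- the key reformulation
  have hiff : ∀ π : Equiv.Perm (Fin n), SYYMem n k s Y Y' l0 i0 π ↔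
      ((∀ i ∈ Icc 1 i0, rho n π i ∈ C i) ∧ (Icc 1 i0).image (pv n π) = V) := by
    intro π
    have himgsub := image_pv_subset n π i0 (by omega)
    have hintiff := inter_split n k (by omega) ((Icc 1 i0).image (pv n π)) Y Y' himgsub hY hY'
    constructor
    · rintro ⟨⟨hlucky, hthr, helem⟩, hints⟩
      have himg : (Icc 1 i0).image (pv n π) = V := hintiff.mp hints
      refine ⟨?_, himg⟩
      have hpv : pv n π i0 ≤ k := by
        unfold Lucky at hlucky
        rw [if_pos ⟨l0, hthr.1⟩] at hlucky
        rwa [hthr.csInf_eq, helem.csInf_eq] at hlucky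
      have hrk : rho n π i0 ≤ Y.card :=
        (rank_iff n k i0 (by omega) (by omega) π Y Y' hY hY' himg).mp hpv
      intro i hi
      simp only [mem_Icc] at hi
      by_cases hii : i = i0
      · subst hii
        simp only [hCdef, if_pos rfl, mem_Icc]
        have h1 := rho_pos n π i (by omega)
        have h2 := helem.1.2.2
        exact ⟨h1, le_min hrk h2⟩
      · simp only [hCdef, if_neg hii, mem_Icc]
        have hile : i < i0 := by omega
        refine ⟨?_, rho_le_self n π i⟩
        by_cases h0 : cnt i = 0
        · rw [h0]
          exact rho_pos n π i (by omega)
        · have hl1 : 1 ≤ cnt i := by omega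
          have hll0 : cnt i ≤ l0 := hcnt_le i
          have hsl : s (cnt i) < i := hcnt_lt i (cnt i) hl1 le_rfl
          rcases Nat.lt_or_ge (cnt i) l0 with hlt | hge
          · have hnthr : ¬ IsThreshold n k s π (cnt i) := fun ht => by
              have := hthr.2 ht
              omega
            by_contra hcon
            push_neg at hcon
            apply hnthr
            refine ⟨hl1, by omega, i, ?_, ?_, by omega⟩
            · unfold sExt
              rw [if_neg (by omega : ¬ cnt i = k + 1)]
              exact hsl
            · unfold sExt
              rw [if_neg (by omega : ¬ cnt i + 1 = k + 1)]
              by_contra hgt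
              push_neg at hgt
              have := hcnt_ge i (cnt i + 1) (by omega) (by omega) hgt
              omega
          · have hle' : cnt i = l0 := by omega
            by_contra hcon
            push_neg at hcon
            have hEi : IsElem n k s π l0 i := by
              refine ⟨?_, le_trans (by omega : i ≤ i0) hi0.2, by omega⟩
              unfold sExt
              rw [if_neg (by omega : ¬ l0 = k+1)]
              rw [← hle']
              exact hsl
            have := helem.2 hEi
            omega
    · rintro ⟨hCcond, himg⟩
      have hrk : rho n π i0 ∈ Icc 1 (min Y.card l0) := by
        have := hCcond i0 (by simp only [mem_Icc]; omega)
        simpa only [hCdef, if_pos rfl] using this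
      simp only [mem_Icc] at hrk
      have hrhoi0 : rho n π i0 ≤ l0 := le_trans hrk.2 (min_le_right _ _)
      have hrhoY : rho n π i0 ≤ Y.card := le_trans hrk.2 (min_le_left _ _)
      have hlow : ∀ i, 1 ≤ i → i < i0 → cnt i < rho n π i := by
        intro i h1 h2
        have := hCcond i (by simp only [mem_Icc]; omega)
        simp only [hCdef, if_neg (by omega : ¬ i = i0), mem_Icc] at this
        omega
      have hE0 : IsElem n k s π l0 i0 := by
        refine ⟨?_, hi0.2, hrhoi0⟩
        unfold sExt
        rw [if_neg (by omega : ¬ l0 = k+1)]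
        exact hi0.1
      have helem : IsLeast {i | IsElem n k s π l0 i} i0 := by
        refine ⟨hE0, ?_⟩
        intro i hEi
        by_contra hlt
        push_neg at hlt
        obtain ⟨he1, he2, he3⟩ := hEi
        unfold sExt at he1
        rw [if_neg (by omega : ¬ l0 = k+1)] at he1
        have h1i : 1 ≤ i := by omega
        have hcf : cnt i = l0 := hcnt_full i he1
        have := hlow i h1i hlt
        omega
      have hthr : IsLeast {l | IsThreshold n k s π l} l0 := by
        refine ⟨⟨by omega, by omega, i0, hE0⟩, ?_⟩
        intro l hthrl
        by_contra hlt
        push_neg at hlt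
        obtain ⟨hl1, hlk, i, he1, he2, he3⟩ := hthrl
        unfold sExt at he1 he2
        rw [if_neg (by omega : ¬ l = k+1)] at he1
        rw [if_neg (by omega : ¬ l + 1 = k+1)] at he2
        have hii0 : i < i0 := by
          have := hmIcc (l+1) l0 (by omega) (by omega) le_rfl
          omega
        have hcge : l ≤ cnt i := hcnt_ge i l hl1 (by omega) he1
        have := hlow i (by omega) hii0
        omega
      refine ⟨⟨?_, hthr, helem⟩, hintiff.mpr himg⟩
      unfold Lucky
      rw [if_pos ⟨l0, hthr.1⟩, hthr.csInf_eq, helem.csInf_eq]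
      exact (rank_iff n k i0 (by omega) (by omega) π Y Y' hY hY' himg).mpr hrhoY
  -- count
  rw [Nat.card_congr (Equiv.subtypeEquivRight hiff)]
  rw [card_perm_pattern n i0 (by omega) V hVsub hVcard C card_perm_rank]
  -- evaluate the product
  have hsplit : Icc 1 i0 = insert i0 (Icc 1 (i0-1)) := by
    ext x
    simp only [mem_insert, mem_Icc]
    omega
  rw [hsplit, Finset.prod_insert (by simp only [mem_Icc]; omega)]
  have hfac : (C i0 ∩ Icc 1 i0).card = min Y.card l0 := by
    simp only [hCdef, if_pos rfl]
    rw [Finset.inter_eq_left.mpr (Finset.Icc_subset_Icc le_rfl (by omega))]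
    rw [Nat.card_Icc]
    omega
  have hrest : ∏ i ∈ Icc 1 (i0-1), (C i ∩ Icc 1 i).card
      = ∏ i ∈ Icc 1 (i0-1), (i - cnt i) := by
    apply Finset.prod_congr rfl
    intro i hi
    simp only [mem_Icc] at hi
    simp only [hCdef, if_neg (by omega : ¬ i = i0)]
    rw [Finset.inter_eq_left.mpr (Finset.Icc_subset_Icc (by omega) le_rfl)]
    rw [Nat.card_Icc]
    omega
  rw [hfac, hrest]
  have hpid : ∏ i ∈ Icc 1 (i0-1), (i - cnt i)
      = (i0 - 1 - l0).factorial * ∏ j ∈ Icc 1 l0, (s j - j + 1) := by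
    simp only [hcntdef]
    exact prodId (i0-1) s l0 hmono' hbdd'
  rw [hpid]
  have hprodcast : ((∏ j ∈ Icc 1 l0, (s j - j + 1) : ℕ) : ℝ)
      = ∏ j ∈ Icc 1 l0, ((s j : ℝ) - j + 1) := by
    rw [Nat.cast_prod]
    apply Finset.prod_congr rfl
    intro j hj
    simp only [mem_Icc] at hj
    have := (hbdd' j hj.1 hj.2).1
    push_cast [this]
    ring
  have he : i0 - 1 - l0 = i0 - l0 - 1 := by omega
  rw [he]
  push_cast [hprodcast]
  ring
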